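/- Theorem 5 (aborting a commutative operation via its inverse): suppose the operations o and o' are commutative, and o⁻¹ is an inverse operation of o. Then for any two schedules α and β, the schedules α ++ [o, o', o⁻¹] ++ β and α ++ [o'] ++ β are view equivalent, i.e., viewEquiv (α ++ [o, o', o⁻¹] ++ β) (α ++ [o'] ++ β). -/
import Mathlib


/-- Run a schedule (list of data operations) on a storage state, returning the final state. -/
def run {σ V : Type*} : List (σ → σ × V) → σ → σ
  | [], s => s
  | o :: P, s => run P ((o s).1)

/-- The return-value trace of a schedule started in a given state. -/
def trace {σ V : Type*} : List (σ → σ × V) → σ → List V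
  | [], _ => []
  | o :: P, s => (o s).2 :: trace P ((o s).1)

/-- View equivalence of schedules: in any context, all future operations return identical values. -/
def viewEquiv {σ V : Type*} (S S' : List (σ → σ × V)) : Prop :=
  ∀ (A P : List (σ → σ × V)) (s : σ),
    trace P (run (A ++ S) s) = trace P (run (A ++ S') s)

/-- Two operations are non-conflicting if both execution orders agree on final state
and on both operations' return values, from every state. -/
def nonConflicting {σ V : Type*} (p q : σ → σ × V) : Prop :=
  ∀ s : σ,
    (q ((p s).1)).1 = (p ((q s).1)).1 ∧
    (p s).2 = (p ((q s).1)).2 ∧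
    (q s).2 = (q ((p s).1)).2

/-- Two operations are commutative if swapping them in any context preserves view equivalence. -/
def commutative {σ V : Type*} (o o' : σ → σ × V) : Prop :=
  ∀ (α β : List (σ → σ × V)), viewEquiv (α ++ [o, o'] ++ β) (α ++ [o', o] ++ β)

/-- `oinv` is an inverse operation of `o`. -/
def inverseOp {σ V : Type*} (o oinv : σ → σ × V) : Prop :=
  ∀ (α β : List (σ → σ × V)), viewEquiv (α ++ β) (α ++ [o, oinv] ++ β)

/-- Theorem 5: if o and o' are commutative and oinv is an inverse of o, then
[o, o', oinv] is view equivalent to [o'] in any context. -/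
theorem abort_via_inverse {σ V : Type*} (o o' oinv : σ → σ × V)
    (hcomm : commutative o o') (hinv : inverseOp o oinv)
    (α β : List (σ → σ × V)) :
    viewEquiv (α ++ [o, o', oinv] ++ β) (α ++ [o'] ++ β) := by
  intro A P s
  have h1 := hcomm α (oinv :: β) A P s
  have h2 := hinv (α ++ [o']) β A P s
  simp only [List.append_assoc, List.cons_append, List.nil_append] at h1 h2 ⊢
  rw [h1, ← h2]
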